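/- arXiv:2409.19997 — 3 statements merged into one kernel-verified Lean document; each statement's English description precedes it below -/
import Mathlib

section
/- Let f : [0,L] → ℝ₊ be continuous with f(s) ~ s as s → 0⁺ and f(L−s) ~ s as s → 0⁺, and f > 0 on (0,L). Define Iₙ(r) = ∫₀ʳ f(s)^{n−1} ds for n ≥ 2. Then the function t ↦ (f(t)^{n−1}/Iₙ(t)²)·∫₀ᵗ (Iₙ(s)²/f(s)^{n−1}) ds is integrable on (0,L). -/
open MeasureTheory Filter Set Asymptotics Topology intervalIntegral

noncomputable section

/-- `f` is a weight function on `[0,L]`: continuous, positive on `(0,L)`,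
with `f s ~ s` as `s → 0⁺` and `f (L - s) ~ s` as `s → 0⁺`. -/
def IsWeightFn (L : ℝ) (f : ℝ → ℝ) : Prop :=
  ContinuousOn f (Set.Icc 0 L) ∧ (∀ s ∈ Set.Ioo 0 L, 0 < f s) ∧
    Asymptotics.IsEquivalent (𝓝[>] (0:ℝ)) f id ∧
    Asymptotics.IsEquivalent (𝓝[>] (0:ℝ)) (fun s => f (L - s)) id

lemma bounds_of_equiv {g : ℝ → ℝ} (h : IsEquivalent (𝓝[>](0:ℝ)) g id) :
    ∃ δ > 0, ∀ s ∈ Ioo (0:ℝ) δ, s/2 ≤ g s ∧ g s ≤ 2*s := by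
  have h2 := (h.isLittleO).def (by norm_num : (0:ℝ) < 1/2)
  rw [eventually_nhdsWithin_iff, Metric.eventually_nhds_iff] at h2
  obtain ⟨δ, hδ, H⟩ := h2
  refine ⟨δ, hδ, fun s hs => ?_⟩
  have hd : dist s 0 < δ := by
    rw [Real.dist_eq, sub_zero, abs_of_pos hs.1]; exact hs.2
  have := H hd hs.1
  simp only [Pi.sub_apply, id] at this
  rw [Real.norm_eq_abs, Real.norm_eq_abs, abs_of_pos hs.1] at this
  have h3 := abs_le.1 this
  constructor <;> linarith [h3.1, h3.2]

lemma tendsto_zero_of_equiv {g : ℝ → ℝ} (h : IsEquivalent (𝓝[>](0:ℝ)) g id) :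
    Tendsto g (𝓝[>](0:ℝ)) (𝓝 0) :=
  h.symm.tendsto_nhds (by simpa using tendsto_id.mono_left (nhdsWithin_le_nhds))

lemma eq_zero_endpoint {L : ℝ} (hL : 0 < L) {f : ℝ → ℝ}
    (hc : ContinuousOn f (Icc 0 L)) (ht : Tendsto f (𝓝[>](0:ℝ)) (𝓝 0)) : f 0 = 0 := by
  have hne : (𝓝[Ioo (0:ℝ) L] 0).NeBot := by
    rw [← mem_closure_iff_nhdsWithin_neBot, closure_Ioo hL.ne]
    exact ⟨le_refl 0, hL.le⟩
  have h1 : Tendsto f (𝓝[Ioo (0:ℝ) L] 0) (𝓝 (f 0)) :=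
    (hc 0 ⟨le_refl 0, hL.le⟩).mono_left (nhdsWithin_mono _ Ioo_subset_Icc_self)
  have h2 : Tendsto f (𝓝[Ioo (0:ℝ) L] 0) (𝓝 0) :=
    ht.mono_left (nhdsWithin_mono _ (fun x hx => hx.1))
  exact tendsto_nhds_unique h1 h2

lemma eq_zero_endpoint' {L : ℝ} (hL : 0 < L) {f : ℝ → ℝ}
    (hc : ContinuousOn f (Icc 0 L)) (ht : Tendsto (fun s => f (L - s)) (𝓝[>](0:ℝ)) (𝓝 0)) :
    f L = 0 := by
  have hne : (𝓝[Ioo (0:ℝ) L] 0).NeBot := by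
    rw [← mem_closure_iff_nhdsWithin_neBot, closure_Ioo hL.ne]
    exact ⟨le_refl 0, hL.le⟩
  have hphi : Tendsto (fun s : ℝ => L - s) (𝓝[Ioo (0:ℝ) L] 0) (𝓝[Icc 0 L] L) := by
    apply tendsto_nhdsWithin_of_tendsto_nhds_of_eventually_within
    · have : Tendsto (fun s : ℝ => L - s) (𝓝 0) (𝓝 (L - 0)) :=
        (continuous_const.sub continuous_id).tendsto 0
      simpa using this.mono_left nhdsWithin_le_nhds
    · filter_upwards [self_mem_nhdsWithin] with s hs
      exact ⟨by linarith [hs.2], by linarith [hs.1.le]⟩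
  have h1 : Tendsto (fun s => f (L - s)) (𝓝[Ioo (0:ℝ) L] 0) (𝓝 (f L)) :=
    (hc L ⟨hL.le, le_refl L⟩).tendsto.comp hphi
  have h2 : Tendsto (fun s => f (L - s)) (𝓝[Ioo (0:ℝ) L] 0) (𝓝 0) :=
    ht.mono_left (nhdsWithin_mono _ (fun x hx => hx.1))
  exact tendsto_nhds_unique h1 h2

set_option maxHeartbeats 1000000 in
theorem integrable_green_kernel
    (L : ℝ) (hL : 0 < L) (f : ℝ → ℝ) (hf : IsWeightFn L f)
    (n : ℕ) (hn : 2 ≤ n) (I : ℝ → ℝ)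
    (hI : ∀ r, I r = ∫ s in (0:ℝ)..r, f s ^ (n - 1)) :
    IntegrableOn
      (fun t => f t ^ (n - 1) / (I t) ^ 2 * ∫ s in (0:ℝ)..t, (I s) ^ 2 / f s ^ (n - 1))
      (Set.Ioo 0 L) := by
  obtain ⟨hfc, hfpos, heq0, heqL⟩ := hf
  set k := n - 1 with hkdef
  have hk1 : 1 ≤ k := by omega
  have hf0 : f 0 = 0 := eq_zero_endpoint hL hfc (tendsto_zero_of_equiv heq0)
  have hfL : f L = 0 := eq_zero_endpoint' hL hfc (tendsto_zero_of_equiv heqL)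
  have hfnn : ∀ s ∈ Icc (0:ℝ) L, 0 ≤ f s := by
    intro s hs
    rcases eq_or_lt_of_le hs.1 with h | h
    · rw [← h, hf0]
    · rcases eq_or_lt_of_le hs.2 with h' | h'
      · rw [h', hfL]
      · exact (hfpos s ⟨h, h'⟩).le
  -- global max of f
  obtain ⟨tM, htM, hM⟩ := isCompact_Icc.exists_isMaxOn (nonempty_Icc.2 hL.le) hfc
  set M := f tM with hMdef
  have hMnn : 0 ≤ M := hfnn tM htM
  have hfM : ∀ s ∈ Icc (0:ℝ) L, f s ≤ M := fun s hs => hM hs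
  -- δ
  obtain ⟨δ₁, hδ₁, H1⟩ := bounds_of_equiv heq0
  obtain ⟨δ₂, hδ₂, H2⟩ := bounds_of_equiv heqL
  set δ := min (min δ₁ δ₂ / 2) (L/3) with hδdef
  have hδpos : 0 < δ := by
    apply lt_min (by positivity) (by positivity)
  have hδl3 : δ ≤ L/3 := min_le_right _ _
  have hδL : δ < L - δ := by linarith
  have hδltL : δ < L := by linarith
  have hmm : 0 < min δ₁ δ₂ := lt_min hδ₁ hδ₂
  have hδlt1 : δ < δ₁ :=
    calc δ ≤ min δ₁ δ₂ / 2 := min_le_left _ _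
    _ < min δ₁ δ₂ := by linarith
    _ ≤ δ₁ := min_le_left _ _
  have hδlt2 : δ < δ₂ :=
    calc δ ≤ min δ₁ δ₂ / 2 := min_le_left _ _
    _ < min δ₁ δ₂ := by linarith
    _ ≤ δ₂ := min_le_right _ _
  have hδ1 : ∀ s, 0 < s → s ≤ δ → s/2 ≤ f s ∧ f s ≤ 2*s := fun s h1 h2 =>
    H1 s ⟨h1, lt_of_le_of_lt h2 hδlt1⟩
  have hδ2 : ∀ t, L - δ ≤ t → t < L → (L-t)/2 ≤ f t ∧ f t ≤ 2*(L-t) := by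
    intro t h1 h2
    have := H2 (L - t) ⟨by linarith, by linarith⟩
    rwa [sub_sub_cancel] at this
  -- basic integral facts about I
  have hmem0 : (0:ℝ) ∈ Icc (0:ℝ) L := ⟨le_refl 0, hL.le⟩
  have hfkc : ContinuousOn (fun s => f s ^ k) (Icc 0 L) := hfc.pow k
  have hfkint : ∀ a b, a ∈ Icc (0:ℝ) L → b ∈ Icc (0:ℝ) L →
      IntervalIntegrable (fun s => f s ^ k) volume a b := by
    intro a b ha hb
    exact (hfkc.mono (uIcc_subset_Icc ha hb)).intervalIntegrable
  have hI0 : I 0 = 0 := by rw [hI]; simp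
  have hIdiff : ∀ a b, a ∈ Icc (0:ℝ) L → b ∈ Icc (0:ℝ) L →
      I b - I a = ∫ s in a..b, f s ^ k := by
    intro a b ha hb
    have h := intervalIntegral.integral_add_adjacent_intervals
      (hfkint 0 a hmem0 ha) (hfkint a b ha hb)
    rw [hI, hI, ← h]; ring
  have hImono : ∀ a b, a ∈ Icc (0:ℝ) L → b ∈ Icc (0:ℝ) L → a ≤ b → I a ≤ I b := by
    intro a b ha hb hab
    have h := hIdiff a b ha hb
    have h2 : 0 ≤ ∫ s in a..b, f s ^ k :=
      intervalIntegral.integral_nonneg hab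
        (fun u hu => pow_nonneg (hfnn u (Icc_subset_Icc ha.1 hb.2 hu)) k)
    linarith
  have hIpos : ∀ t, 0 < t → t ≤ L → 0 < I t := by
    intro t h1 h2
    rw [hI]
    exact intervalIntegral.intervalIntegral_pos_of_pos_on
      (hfkint 0 t hmem0 ⟨h1.le, h2⟩)
      (fun x hx => pow_pos (hfpos x ⟨hx.1, lt_of_lt_of_le hx.2 h2⟩) k) h1
  have hInn : ∀ t ∈ Icc (0:ℝ) L, 0 ≤ I t := by
    intro t ht
    have := hImono 0 t hmem0 ht ht.1
    linarith [hI0 ▸ this]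
  have hIlow : ∀ t, 0 < t → t ≤ δ → t^(k+1) / ((k+1) * 2^k) ≤ I t := by
    intro t h1 h2
    have htL : t ≤ L := le_trans h2 hδltL.le
    have hcomp : ∀ s ∈ Icc (0:ℝ) t, s^k / 2^k ≤ f s ^ k := by
      intro s hs
      rcases eq_or_lt_of_le hs.1 with h | h
      · rw [← h, hf0]
        simp [zero_pow (by omega : k ≠ 0)]
      · have hb := (hδ1 s h (le_trans hs.2 h2)).1
        calc s^k/2^k = (s/2)^k := (div_pow s 2 k).symm
        _ ≤ f s ^ k := pow_le_pow_left₀ (by positivity) hb k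
    have hint : ∫ s in (0:ℝ)..t, s^k/2^k = t^(k+1)/((k+1) * 2^k) := by
      rw [intervalIntegral.integral_div, integral_pow]
      rw [zero_pow (by omega : k + 1 ≠ 0), sub_zero, div_div]
    calc t^(k+1)/((k+1)*2^k) = ∫ s in (0:ℝ)..t, s^k/2^k := hint.symm
    _ ≤ ∫ s in (0:ℝ)..t, f s ^ k := by
        apply intervalIntegral.integral_mono_on h1.le
          ((continuous_pow k).div_const _).continuousOn.intervalIntegrable
          (hfkint 0 t hmem0 ⟨h1.le, htL⟩) hcomp
    _ = I t := (hI t).symm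
  have hIup : ∀ t, 0 ≤ t → t ≤ δ → I t ≤ 2^k * t^(k+1) := by
    intro t h0 h2
    rcases eq_or_lt_of_le h0 with h | h
    · rw [← h, hI0]
      simp [zero_pow (by omega : k + 1 ≠ 0)]
    · have htL : t ≤ L := le_trans h2 hδltL.le
      have hcomp : ∀ s ∈ Icc (0:ℝ) t, f s ^ k ≤ 2^k * s^k := by
        intro s hs
        rcases eq_or_lt_of_le hs.1 with h' | h'
        · rw [← h', hf0]
          simp [zero_pow (by omega : k ≠ 0)]
        · have hb := (hδ1 s h' (le_trans hs.2 h2)).2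
          calc f s ^ k ≤ (2*s)^k :=
                pow_le_pow_left₀ (hfnn s (Icc_subset_Icc (le_refl 0) htL hs)) hb k
          _ = 2^k * s^k := mul_pow 2 s k
      have hint : ∫ s in (0:ℝ)..t, 2^k * s^k = 2^k * (t^(k+1)/(k+1)) := by
        rw [intervalIntegral.integral_const_mul, integral_pow]
        rw [zero_pow (by omega : k + 1 ≠ 0)]
        push_cast
        ring
      calc I t = ∫ s in (0:ℝ)..t, f s ^ k := hI t
      _ ≤ ∫ s in (0:ℝ)..t, 2^k * s^k := by
          apply intervalIntegral.integral_mono_on h.le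
            (hfkint 0 t hmem0 ⟨h0, htL⟩)
            ((continuous_const.mul (continuous_pow k)).continuousOn.intervalIntegrable) hcomp
      _ = 2^k * (t^(k+1)/(k+1)) := hint
      _ ≤ 2^k * t^(k+1) := by
          have h3 : (0:ℝ) < (k:ℝ) + 1 := by positivity
          have h4 : (0:ℝ) ≤ t^(k+1) := by positivity
          have : t^(k+1)/((k:ℝ)+1) ≤ t^(k+1) := by
            rw [div_le_iff₀ h3]
            nlinarith
          nlinarith [pow_nonneg (by norm_num : (0:ℝ) ≤ 2) k]
  -- minimum on the middle
  obtain ⟨tm, htm, hm⟩ := isCompact_Icc.exists_isMinOn (nonempty_Icc.2 hδL.le)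
    (hfc.mono (Icc_subset_Icc hδpos.le (by linarith)))
  set m := f tm with hmdef
  have hmpos : 0 < m :=
    hfpos tm ⟨lt_of_lt_of_le hδpos htm.1, lt_of_le_of_lt htm.2 (by linarith)⟩
  have hmf : ∀ s ∈ Icc δ (L-δ), m ≤ f s := fun s hs => hm hs
  -- the function q
  set q : ℝ → ℝ := fun s => I s ^ 2 / f s ^ k with hqdef
  have hq0 : q 0 = 0 := by
    simp [hqdef, hI0]
  have hqnn : ∀ s ∈ Icc (0:ℝ) L, 0 ≤ q s := by
    intro s hs
    exact div_nonneg (sq_nonneg _) (pow_nonneg (hfnn s hs) k)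
  have hIct : ∀ t ∈ Ioo (0:ℝ) L, ContinuousAt I t := by
    intro t ht
    have hfk_at : ∀ x ∈ Ioo (0:ℝ) L, ContinuousAt (fun s => f s ^ k) x := fun x hx =>
      hfkc.continuousAt (Icc_mem_nhds hx.1 hx.2)
    have hd : HasDerivAt (fun u => ∫ s in (0:ℝ)..u, f s ^ k) (f t ^ k) t :=
      intervalIntegral.integral_hasDerivAt_right
        (hfkint 0 t hmem0 ⟨ht.1.le, ht.2.le⟩)
        (ContinuousAt.stronglyMeasurableAtFilter isOpen_Ioo hfk_at t ht)
        (hfk_at t ht)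
    have hIfun : I = fun u => ∫ s in (0:ℝ)..u, f s ^ k := funext hI
    rw [hIfun]
    exact hd.continuousAt
  have hqct : ∀ t ∈ Ioo (0:ℝ) L, ContinuousAt q t := by
    intro t ht
    have h1 : ContinuousAt f t := hfc.continuousAt (Icc_mem_nhds ht.1 ht.2)
    exact ((hIct t ht).pow 2).div (h1.pow k) (pow_ne_zero k (hfpos t ht).ne')
  -- bounds for q
  have hqsmall : ∀ s, 0 < s → s ≤ δ → q s ≤ 8^k * s^(k+2) := by
    intro s h1 h2
    have hsL : s ≤ L := le_trans h2 hδltL.le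
    have hfs : (s/2)^k ≤ f s ^ k :=
      pow_le_pow_left₀ (by positivity) (hδ1 s h1 h2).1 k
    have hfs0 : (0:ℝ) < (s/2)^k := by positivity
    have hIs : I s ≤ 2^k * s^(k+1) := hIup s h1.le h2
    have hIs0 : 0 ≤ I s := hInn s ⟨h1.le, hsL⟩
    calc q s = I s ^ 2 / f s ^ k := rfl
    _ ≤ (2^k * s^(k+1))^2 / (s/2)^k := by
        apply div_le_div₀ (by positivity) (pow_le_pow_left₀ hIs0 hIs 2) hfs0 hfs
    _ = 8^k * s^(k+2) := by
        have hs0 : s ≠ 0 := h1.ne'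
        rw [div_pow, div_div_eq_mul_div]
        rw [show (8:ℝ)^k = 2^k*2^k*2^k by rw [← mul_pow, ← mul_pow]; norm_num]
        field_simp
        ring
  have hqmid : ∀ s ∈ Icc δ (L-δ), q s ≤ I L ^ 2 / m^k := by
    intro s hs
    have hsIcc : s ∈ Icc (0:ℝ) L := ⟨le_trans hδpos.le hs.1, by linarith [hs.2]⟩
    apply div_le_div₀ (sq_nonneg _)
      (pow_le_pow_left₀ (hInn s hsIcc) (hImono s L hsIcc (right_mem_Icc.2 hL.le) hsIcc.2) 2)
      (pow_pos hmpos k)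
      (pow_le_pow_left₀ hmpos.le (hmf s hs) k)
  set B : ℝ := max (8^k * L^(k+2)) (I L ^ 2 / m^k) with hBdef
  have hBnn : 0 ≤ B := le_trans (by positivity) (le_max_left _ _)
  have hqB : ∀ s, 0 < s → s ≤ L - δ → q s ≤ B := by
    intro s h1 h2
    rcases le_or_gt s δ with h | h
    · refine le_trans (hqsmall s h1 h) (le_trans ?_ (le_max_left _ _))
      have : s^(k+2) ≤ L^(k+2) :=
        pow_le_pow_left₀ h1.le (by linarith) _
      nlinarith [pow_nonneg (by norm_num : (0:ℝ) ≤ 8) k]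
    · exact le_trans (hqmid s ⟨h.le, h2⟩) (le_max_right _ _)
  have hqlarge : ∀ s, L - δ ≤ s → s < L → q s ≤ I L ^ 2 * 2^k / (L-s)^k := by
    intro s h1 h2
    have hsIcc : s ∈ Icc (0:ℝ) L := ⟨by linarith, h2.le⟩
    have hLs : 0 < L - s := by linarith
    have hfs : ((L-s)/2)^k ≤ f s ^ k :=
      pow_le_pow_left₀ (by positivity) (hδ2 s h1 h2).1 k
    calc q s ≤ I L ^ 2 / ((L-s)/2)^k := by
          apply div_le_div₀ (sq_nonneg _)
            (pow_le_pow_left₀ (hInn s hsIcc) (hImono s L hsIcc (right_mem_Icc.2 hL.le) hsIcc.2) 2)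
            (by positivity) hfs
    _ = I L ^ 2 * 2^k / (L-s)^k := by
        rw [div_pow]
        field_simp
  -- integrability of q
  have hqcint : ∀ a b, 0 < a → a ≤ b → b < L → IntervalIntegrable q volume a b := by
    intro a b ha hab hb
    apply ContinuousOn.intervalIntegrable
    intro x hx
    rw [uIcc_of_le hab] at hx
    exact (hqct x ⟨lt_of_lt_of_le ha hx.1, lt_of_le_of_lt hx.2 hb⟩).continuousWithinAt
  have hqint : ∀ t, 0 < t → t < L → IntervalIntegrable q volume 0 t := by
    intro t h1 h2
    rw [intervalIntegrable_iff_integrableOn_Ioc_of_le h1.le]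
    have hmeas : AEStronglyMeasurable q (volume.restrict (Ioc 0 t)) := by
      apply ContinuousOn.aestronglyMeasurable ?_ measurableSet_Ioc
      intro x hx
      exact (hqct x ⟨hx.1, lt_of_le_of_lt hx.2 h2⟩).continuousWithinAt
    have hLt : 0 < L - t := by linarith
    refine Integrable.mono' (g := fun _ => max B (I L ^ 2 * 2^k / (L-t)^k))
      (integrableOn_const (C := max B (I L ^ 2 * 2^k / (L-t)^k)) measure_Ioc_lt_top.ne) hmeas ?_
    rw [ae_restrict_iff' measurableSet_Ioc]
    apply Eventually.of_forall
    intro x hx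
    rw [Real.norm_eq_abs, abs_of_nonneg (hqnn x ⟨hx.1.le, le_trans hx.2 h2.le⟩)]
    rcases le_or_gt x (L - δ) with h | h
    · exact le_trans (hqB x hx.1 h) (le_max_left _ _)
    · have hxL : x < L := lt_of_le_of_lt hx.2 h2
      refine le_trans (hqlarge x h.le hxL) (le_trans ?_ (le_max_right _ _))
      have hLx : 0 < L - x := by linarith
      gcongr
      exact hx.2
  -- bounds for J
  have hJnn : ∀ t, 0 ≤ t → t ≤ L → 0 ≤ ∫ s in (0:ℝ)..t, q s :=
    fun t h1 h2 => intervalIntegral.integral_nonneg h1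
      (fun u hu => hqnn u ⟨hu.1, le_trans hu.2 h2⟩)
  have hJsmall : ∀ t, 0 < t → t ≤ δ → (∫ s in (0:ℝ)..t, q s) ≤ 8^k * t^(k+3) := by
    intro t h1 h2
    have h3 : (∫ s in (0:ℝ)..t, q s) ≤ ∫ s in (0:ℝ)..t, 8^k * s^(k+2) := by
      apply intervalIntegral.integral_mono_on h1.le (hqint t h1 (by linarith))
        ((continuous_const.mul (continuous_pow _)).continuousOn.intervalIntegrable)
      intro s hs
      rcases eq_or_lt_of_le hs.1 with h | h
      · rw [← h, hq0]; exact mul_nonneg (by positivity) (pow_nonneg le_rfl _)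
      · exact hqsmall s h (le_trans hs.2 h2)
    have h4 : ∫ s in (0:ℝ)..t, (8:ℝ)^k * s^(k+2) = 8^k * (t^(k+3)/((k:ℝ)+3)) := by
      rw [intervalIntegral.integral_const_mul, integral_pow,
        zero_pow (by omega : k+2+1 ≠ 0), sub_zero]
      push_cast
      ring_nf
    have h5 : t^(k+3)/((k:ℝ)+3) ≤ t^(k+3) := by
      rw [div_le_iff₀ (by positivity)]
      nlinarith [pow_nonneg h1.le (k+3)]
    calc (∫ s in (0:ℝ)..t, q s) ≤ 8^k * (t^(k+3)/((k:ℝ)+3)) := by rw [← h4]; exact h3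
    _ ≤ 8^k * t^(k+3) := by nlinarith [pow_nonneg (by norm_num : (0:ℝ) ≤ 8) k]
  have hJmid : ∀ t, 0 ≤ t → t ≤ L - δ → (∫ s in (0:ℝ)..t, q s) ≤ B * L := by
    intro t h1 h2
    rcases eq_or_lt_of_le h1 with h | h
    · rw [← h]
      simp only [intervalIntegral.integral_same]
      exact mul_nonneg hBnn hL.le
    · have h3 : (∫ s in (0:ℝ)..t, q s) ≤ ∫ s in (0:ℝ)..t, B := by
        apply intervalIntegral.integral_mono_on h.le (hqint t h (by linarith))
          intervalIntegrable_const
        intro s hs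
        rcases eq_or_lt_of_le hs.1 with h' | h'
        · rw [← h', hq0]; exact hBnn
        · exact hqB s h' (le_trans hs.2 h2)
      rw [intervalIntegral.integral_const, smul_eq_mul, sub_zero] at h3
      nlinarith
  have hJlarge : ∀ t, L - δ ≤ t → t < L →
      (∫ s in (0:ℝ)..t, q s) ≤ B * L + δ * (I L ^2 * 2^k / (L-t)^k) := by
    intro t h1 h2
    have hLd0 : 0 < L - δ := by linarith
    have hsplit : (∫ s in (0:ℝ)..t, q s)
        = (∫ s in (0:ℝ)..(L-δ), q s) + ∫ s in (L-δ)..t, q s :=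
      (intervalIntegral.integral_add_adjacent_intervals
        (hqint (L-δ) hLd0 (by linarith)) (hqcint (L-δ) t hLd0 h1 h2)).symm
    have hb1 : (∫ s in (0:ℝ)..(L-δ), q s) ≤ B * L := hJmid (L-δ) hLd0.le (le_refl _)
    have hLt : 0 < L - t := by linarith
    have hc : (0:ℝ) ≤ I L ^2 * 2^k / (L-t)^k := by
      apply div_nonneg (by positivity) (by positivity)
    have hb2 : (∫ s in (L-δ)..t, q s) ≤ (t - (L-δ)) * (I L^2*2^k/(L-t)^k) := by
      have h3 : (∫ s in (L-δ)..t, q s) ≤ ∫ _s in (L-δ)..t, (I L^2*2^k/(L-t)^k) := by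
        apply intervalIntegral.integral_mono_on h1 (hqcint (L-δ) t hLd0 h1 h2)
          intervalIntegrable_const
        intro s hs
        have hsL : s < L := lt_of_le_of_lt hs.2 h2
        have hLs : 0 < L - s := by linarith
        refine le_trans (hqlarge s hs.1 hsL) ?_
        gcongr
        exact hs.2
      rwa [intervalIntegral.integral_const, smul_eq_mul] at h3
    have hb3 : (t - (L-δ)) * (I L^2*2^k/(L-t)^k) ≤ δ * (I L^2*2^k/(L-t)^k) :=
      mul_le_mul_of_nonneg_right (by linarith) hc
    rw [hsplit]
    linarith
  -- final constants
  have hIδ : 0 < I δ := hIpos δ hδpos hδltL.le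
  set A : ℝ := ((k:ℝ)+1) * 2^k with hAdef
  have hA : 0 < A := by positivity
  set C₁ : ℝ := 2^k * A^2 * 8^k * δ with hC1
  set C₂ : ℝ := M^k * (B*L) / I δ ^ 2 with hC2
  set C₃ : ℝ := (2^k * δ^k * (B*L) + δ * (I L^2 * 4^k)) / I δ ^ 2 with hC3
  set C : ℝ := max C₁ (max C₂ C₃) with hC
  have hBL : 0 ≤ B * L := mul_nonneg hBnn hL.le
  have hILnn : 0 ≤ I L := hInn L (right_mem_Icc.2 hL.le)
  -- the pointwise bound
  have hgb : ∀ t ∈ Ioo (0:ℝ) L,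
      f t ^ k / I t ^ 2 * (∫ s in (0:ℝ)..t, q s) ≤ C := by
    intro t ht
    have hIt : 0 < I t := hIpos t ht.1 ht.2.le
    have htIcc : t ∈ Icc (0:ℝ) L := ⟨ht.1.le, ht.2.le⟩
    rw [div_mul_eq_mul_div]
    rcases le_or_gt t δ with hcase1 | hcase1
    · -- near 0
      have e1 : f t ^ k ≤ 2^k * t^k := by
        calc f t ^ k ≤ (2*t)^k := pow_le_pow_left₀ (hfnn t htIcc) (hδ1 t ht.1 hcase1).2 k
        _ = 2^k * t^k := mul_pow 2 t k
      have e2 : t^(k+1)/A ≤ I t := hIlow t ht.1 hcase1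
      have e2' : (0:ℝ) < t^(k+1)/A := div_pos (pow_pos ht.1 _) hA
      have e3 := hJsmall t ht.1 hcase1
      have e3' := hJnn t ht.1.le ht.2.le
      have step : f t ^ k * (∫ s in (0:ℝ)..t, q s) / I t ^ 2
          ≤ (2^k * t^k) * (8^k * t^(k+3)) / (t^(k+1)/A)^2 := by
        have n1 : (0:ℝ) ≤ 2^k * t^k := mul_nonneg (by positivity) (pow_nonneg ht.1.le k)
        have n2 : (0:ℝ) ≤ 8^k * t^(k+3) := mul_nonneg (by positivity) (pow_nonneg ht.1.le _)
        apply div_le_div₀ (mul_nonneg n1 n2)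
          (mul_le_mul e1 e3 e3' n1) (pow_pos e2' 2)
          (pow_le_pow_left₀ e2'.le e2 2)
      have eq1 : (2^k * t^k) * ((8:ℝ)^k * t^(k+3)) / (t^(k+1)/A)^2 = 2^k * A^2 * 8^k * t := by
        have ht0 : t ≠ 0 := ht.1.ne'
        field_simp
        ring
      refine le_trans step (le_trans ?_ (le_max_left _ _))
      rw [eq1, hC1]
      have : (0:ℝ) ≤ 2^k * A^2 * 8^k := by positivity
      nlinarith
    · rcases le_or_gt t (L-δ) with hcase2 | hcase2
      · -- middle
        have e1 : f t ^ k ≤ M^k := pow_le_pow_left₀ (hfnn t htIcc) (hfM t htIcc) k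
        have e2 : I δ ≤ I t := hImono δ t ⟨hδpos.le, hδltL.le⟩ htIcc hcase1.le
        have e3 := hJmid t ht.1.le hcase2
        have e3' := hJnn t ht.1.le ht.2.le
        have step : f t ^ k * (∫ s in (0:ℝ)..t, q s) / I t ^ 2 ≤ M^k * (B*L) / I δ ^ 2 := by
          apply div_le_div₀ (mul_nonneg (pow_nonneg hMnn k) hBL)
            (mul_le_mul e1 e3 e3' (pow_nonneg hMnn k)) (by positivity)
            (pow_le_pow_left₀ hIδ.le e2 2)
        exact le_trans step (le_trans (le_max_left C₂ C₃) (le_max_right C₁ _))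
      · -- near L
        have hLt : 0 < L - t := by linarith [ht.2]
        have e1 : f t ^ k ≤ 2^k * (L-t)^k := by
          calc f t ^ k ≤ (2*(L-t))^k :=
                pow_le_pow_left₀ (hfnn t htIcc) (hδ2 t hcase2.le ht.2).2 k
          _ = 2^k * (L-t)^k := mul_pow 2 (L-t) k
        have e2 : I δ ≤ I t := hImono δ t ⟨hδpos.le, hδltL.le⟩ htIcc (by linarith)
        have e3 := hJlarge t hcase2.le ht.2
        have e3' := hJnn t ht.1.le ht.2.le
        have hnum : (0:ℝ) ≤ B * L + δ * (I L ^2 * 2^k / (L-t)^k) := by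
          have : (0:ℝ) ≤ I L ^2 * 2^k / (L-t)^k := by positivity
          nlinarith [hδpos.le]
        have step : f t ^ k * (∫ s in (0:ℝ)..t, q s) / I t ^ 2
            ≤ (2^k * (L-t)^k) * (B * L + δ * (I L ^2 * 2^k / (L-t)^k)) / I δ ^ 2 := by
          apply div_le_div₀ (mul_nonneg (by positivity) hnum)
            (mul_le_mul e1 e3 e3' (by positivity)) (by positivity)
            (pow_le_pow_left₀ hIδ.le e2 2)
        have key : (2^k * (L-t)^k) * (B * L + δ * (I L ^2 * 2^k / (L-t)^k))
            = 2^k * (L-t)^k * (B*L) + δ * (I L^2 * 4^k) := by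
          have h0 : (L-t)^k ≠ 0 := by positivity
          rw [show (4:ℝ)^k = 2^k*2^k from by rw [← mul_pow]; norm_num]
          field_simp
        have key2 : 2^k * (L-t)^k * (B*L) + δ * (I L^2 * 4^k)
            ≤ 2^k * δ^k * (B*L) + δ * (I L^2 * 4^k) := by
          have h1 : (L-t)^k ≤ δ^k := pow_le_pow_left₀ hLt.le (by linarith) k
          have h2k : (0:ℝ) ≤ 2^k := by positivity
          have h3 := mul_le_mul_of_nonneg_right (mul_le_mul_of_nonneg_left h1 h2k) hBL
          linarith
        refine le_trans step (le_trans ?_ (le_trans (le_max_right C₁ _) (le_refl C)))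
        refine le_trans ?_ (le_max_right C₂ C₃)
        rw [key, hC3]
        exact (div_le_div_iff_of_pos_right (pow_pos hIδ 2)).2 key2
  -- conclusion
  refine Integrable.mono' (g := fun _ => C)
    (integrableOn_const (C := C) measure_Ioo_lt_top.ne) ?_ ?_
  · apply ContinuousOn.aestronglyMeasurable ?_ measurableSet_Ioo
    intro t ht
    have hJc : ContinuousAt (fun u => ∫ s in (0:ℝ)..u, q s) t :=
      (intervalIntegral.integral_hasDerivAt_right (hqint t ht.1 ht.2)
        (ContinuousAt.stronglyMeasurableAtFilter isOpen_Ioo hqct t ht) (hqct t ht)).continuousAt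
    have hfa : ContinuousAt f t := hfc.continuousAt (Icc_mem_nhds ht.1 ht.2)
    exact (((hfa.pow k).div ((hIct t ht).pow 2)
      (pow_ne_zero 2 (hIpos t ht.1 ht.2.le).ne')).mul hJc).continuousWithinAt
  · rw [ae_restrict_iff' measurableSet_Ioo]
    apply Eventually.of_forall
    intro t ht
    have h0 : 0 ≤ f t ^ k / I t ^ 2 * ∫ s in (0:ℝ)..t, q s :=
      mul_nonneg (div_nonneg (pow_nonneg (hfnn t ⟨ht.1.le, ht.2.le⟩) k) (sq_nonneg _))
        (hJnn t ht.1.le ht.2.le)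
    rw [Real.norm_eq_abs, abs_of_nonneg h0]
    exact hgb t ht
end
end

section
/- Under the same hypotheses (f C³, symmetric about L/2, f' > 0 on [0,L/2), f'' ≤ 0, f''(L/2) < 0), the function s ↦ f(s)/f'(s) − f(L/2)/(|f''(L/2)|(L/2 − s)) is bounded on [0, L/2), and consequently (1/n)∫₀^{L/2 − A/√n} f(s)/f'(s) ds = (f(L/2)/|f''(L/2)|)(ln n/(2n) − ln A/n) + O(1/n) uniformly for fixed A. -/
open MeasureTheory Filter Set Asymptotics Topology intervalIntegral Real

noncomputable section

private lemma aux_smooth (f : ℝ → ℝ) (hf : ContDiff ℝ 3 f) :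
    Differentiable ℝ f ∧ Differentiable ℝ (deriv f) ∧ Differentiable ℝ (deriv (deriv f)) ∧
      Continuous (deriv (deriv (deriv f))) := by
  have h3 : ContDiff ℝ (2 + 1 : WithTop ℕ∞) f := by
    rw [show (2+1 : WithTop ℕ∞) = 3 from rfl]; exact hf
  have hC2 : ContDiff ℝ 2 (deriv f) := (contDiff_succ_iff_deriv.mp h3).2.2
  have h2 : ContDiff ℝ (1 + 1 : WithTop ℕ∞) (deriv f) := by
    rw [show (1+1 : WithTop ℕ∞) = 2 from rfl]; exact hC2
  have hC1 : ContDiff ℝ 1 (deriv (deriv f)) := (contDiff_succ_iff_deriv.mp h2).2.2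
  have h1 : ContDiff ℝ (0 + 1 : WithTop ℕ∞) (deriv (deriv f)) := by
    rw [show (0+1 : WithTop ℕ∞) = 1 from rfl]; exact hC1
  have hC0 : ContDiff ℝ 0 (deriv (deriv (deriv f))) := (contDiff_succ_iff_deriv.mp h1).2.2
  exact ⟨hf.differentiable (by norm_num), hC2.differentiable (by norm_num),
    hC1.differentiable (by norm_num), hC0.continuous⟩

/-- Core boundedness lemma: `f/f' - f(c)/(D(c-s))` is bounded on `[0,c)` when `f'(c)=0`,
`f''(c) = -D < 0`. -/
private lemma aux_bounded (c D : ℝ) (hc : 0 < c) (f : ℝ → ℝ) (hf : ContDiff ℝ 3 f)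
    (hf' : ∀ s ∈ Set.Ico 0 c, 0 < deriv f s)
    (hf'c : deriv f c = 0) (hD : 0 < D) (hfc2 : deriv (deriv f) c = -D) :
    ∃ M, 0 ≤ M ∧ ∀ s ∈ Set.Ico 0 c,
      |f s / deriv f s - f c / (D * (c - s))| ≤ M := by
  obtain ⟨hD1, hD2, hD3, hC0⟩ := aux_smooth f hf
  have hC2 : Continuous (deriv f) := hD2.continuous
  have hC1 : Continuous (deriv (deriv f)) := hD3.continuous
  set K := f c with hK
  set N : ℝ → ℝ := fun t => D * (c - t) * f t - K * deriv f t with hN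
  set N₁ : ℝ → ℝ := fun t =>
    (-D) * f t + D * (c - t) * deriv f t - K * deriv (deriv f) t with hN₁
  set N₂ : ℝ → ℝ := fun t =>
    ((-D) * deriv f t + ((-D) * deriv f t + D * (c - t) * deriv (deriv f) t))
      - K * deriv (deriv (deriv f)) t with hN₂
  have hlin : ∀ t : ℝ, HasDerivAt (fun y => D * (c - y)) (-D) t := by
    intro t
    simpa using (((hasDerivAt_id t).const_sub c).const_mul D)
  have hNder : ∀ t, HasDerivAt N (N₁ t) t := by
    intro t
    have h := ((hlin t).mul (hD1 t).hasDerivAt).sub (((hD2 t).hasDerivAt).const_mul K)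
    exact h
  have hN₁der : ∀ t, HasDerivAt N₁ (N₂ t) t := by
    intro t
    have h := (((hD1 t).hasDerivAt.const_mul (-D)).add
      ((hlin t).mul (hD2 t).hasDerivAt)).sub (((hD3 t).hasDerivAt).const_mul K)
    exact h
  have hNc : N c = 0 := by simp [hN, hf'c]
  have hN₁c : N₁ c = 0 := by
    simp only [hN₁]
    rw [hfc2, hK]
    ring
  -- bound on N₂ on [0, c]
  have hN₂cont : Continuous N₂ := by
    rw [hN₂]
    exact ((continuous_const.mul hC2).add ((continuous_const.mul hC2).add
      ((continuous_const.mul (continuous_const.sub continuous_id)).mul hC1))).sub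
      (continuous_const.mul hC0)
  obtain ⟨M₂, hM₂⟩ := (isCompact_Icc (a := (0:ℝ)) (b := c)).exists_bound_of_continuousOn
    hN₂cont.continuousOn
  have hM₂0 : 0 ≤ M₂ := le_trans (norm_nonneg _) (hM₂ 0 ⟨le_refl 0, hc.le⟩)
  -- |N₁ t| ≤ M₂ (c - t) on [0,c]
  have hN₁bound : ∀ t ∈ Set.Icc 0 c, |N₁ t| ≤ M₂ * (c - t) := by
    intro t ht
    have h := Convex.norm_image_sub_le_of_norm_hasDerivWithin_le
      (f := N₁) (f' := N₂) (s := Set.Icc 0 c) (C := M₂)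
      (fun x hx => (hN₁der x).hasDerivWithinAt) (fun x hx => hM₂ x hx)
      (convex_Icc 0 c) ht ⟨hc.le, le_refl c⟩
    simpa [hN₁c, Real.norm_eq_abs, abs_of_nonneg (sub_nonneg.mpr ht.2)] using h
  -- |N s| ≤ M₂ (c - s)^2 on [0,c]
  have hNbound : ∀ s ∈ Set.Icc 0 c, |N s| ≤ M₂ * (c - s) ^ 2 := by
    intro s hs
    have h := Convex.norm_image_sub_le_of_norm_hasDerivWithin_le
      (f := N) (f' := N₁) (s := Set.Icc s c) (C := M₂ * (c - s))
      (fun x hx => (hNder x).hasDerivWithinAt)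
      (fun x hx => by
        have h1 := hN₁bound x ⟨hs.1.trans hx.1, hx.2⟩
        have h2 : M₂ * (c - x) ≤ M₂ * (c - s) :=
          mul_le_mul_of_nonneg_left (by linarith [hx.1]) hM₂0
        simpa [Real.norm_eq_abs] using h1.trans h2)
      (convex_Icc s c) ⟨le_refl s, hs.2⟩ ⟨hs.2, le_refl c⟩
    have h2 : |N s| ≤ M₂ * (c - s) * (c - s) := by
      simpa [hNc, Real.norm_eq_abs, abs_of_nonneg (sub_nonneg.mpr hs.2)] using h
    nlinarith [h2]
  -- choose δ where f'' < -D/2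
  obtain ⟨δ, hδpos, hδ⟩ := Metric.continuousAt_iff.mp hC1.continuousAt (D/2) (by positivity)
  have hf''δ : ∀ t : ℝ, |t - c| < δ → deriv (deriv f) t < -(D/2) := by
    intro t ht
    have h := hδ (by simpa [Real.dist_eq] using ht)
    rw [Real.dist_eq, hfc2] at h
    have h2 := (abs_lt.mp h).2
    linarith
  -- lower bound on f' near c
  have hf'low : ∀ s : ℝ, c - δ < s → 0 ≤ s → s < c → D/2 * (c - s) ≤ deriv f s := by
    intro s h1 h0 h2
    obtain ⟨ξ, hξ, hsl⟩ := exists_hasDerivAt_eq_slope (deriv f) (deriv (deriv f)) h2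
      hC2.continuousOn (fun x _ => (hD2 x).hasDerivAt)
    rw [hf'c] at hsl
    have hξb : deriv (deriv f) ξ < -(D/2) := by
      apply hf''δ
      rw [abs_sub_comm, abs_of_pos (sub_pos.mpr hξ.2)]
      linarith [hξ.1]
    rw [hsl] at hξb
    have hu : 0 < c - s := sub_pos.mpr h2
    rw [div_lt_iff₀ hu] at hξb
    linarith
  -- far bound via compactness
  have hGcont : ContinuousOn (fun s => f s / deriv f s - K / (D * (c - s)))
      (Set.Icc 0 (c - δ)) := by
    apply ContinuousOn.sub
    · exact (hD1.continuous.continuousOn).div hC2.continuousOn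
        (fun x hx => ne_of_gt (hf' x ⟨hx.1, by linarith [hx.2]⟩))
    · exact continuousOn_const.div
        ((continuous_const.mul (continuous_const.sub continuous_id)).continuousOn)
        (fun x hx => ne_of_gt (mul_pos hD (by linarith [hx.2])))
  obtain ⟨M₁, hM₁⟩ := (isCompact_Icc (a := (0:ℝ)) (b := c - δ)).exists_bound_of_continuousOn
    hGcont
  refine ⟨max (max M₁ (M₂ * 2 / (D * D))) 0, le_max_right _ _, ?_⟩
  intro s hs
  by_cases hcase : c - s < δ
  · -- near c
    have hu : 0 < c - s := sub_pos.mpr hs.2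
    have hfs : 0 < deriv f s := hf' s hs
    have hrepr : f s / deriv f s - K / (D * (c - s)) = N s / (D * (c - s) * deriv f s) := by
      rw [hN, hK]
      field_simp
    have hden : 0 < D * (c - s) * deriv f s := by positivity
    have hlow := hf'low s (by linarith) hs.1 hs.2
    have hden2 : D * (c - s) * (D/2 * (c - s)) ≤ D * (c - s) * deriv f s :=
      mul_le_mul_of_nonneg_left hlow (by positivity)
    have hstep : |N s| / (D * (c - s) * deriv f s)
        ≤ (M₂ * (c - s) ^ 2) / (D * (c - s) * (D/2 * (c - s))) :=
      div_le_div₀ (by positivity) (hNbound s ⟨hs.1, hs.2.le⟩) (by positivity) hden2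
    have heq : (M₂ * (c - s) ^ 2) / (D * (c - s) * (D/2 * (c - s))) = M₂ * 2 / (D * D) := by
      field_simp
    rw [hrepr, abs_div, abs_of_pos hden]
    calc |N s| / (D * (c - s) * deriv f s) ≤ M₂ * 2 / (D * D) := by rw [← heq]; exact hstep
    _ ≤ max (max M₁ (M₂ * 2 / (D * D))) 0 :=
        le_trans (le_max_right M₁ _) (le_max_left _ 0)
  · -- far from c
    push_neg at hcase
    have := hM₁ s ⟨hs.1, by linarith⟩
    rw [Real.norm_eq_abs] at this
    exact this.trans (le_trans (le_max_left M₁ _) (le_max_left _ 0))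

/-- `f/f' - f(L/2)/(|f''(L/2)|(L/2 - s))` is bounded on `[0, L/2)`, and
`(1/n)∫₀^{L/2 - A/√n} f/f' = (f(L/2)/|f''(L/2)|)(ln n/(2n) - ln A/n) + O(1/n)`. -/
theorem f_over_f'_expansion
    (L : ℝ) (hL : 0 < L) (f : ℝ → ℝ)
    (hf : ContDiff ℝ 3 f)
    (hpos : ∀ s ∈ Set.Ioo 0 L, 0 < f s)
    (hasymp : Asymptotics.IsEquivalent (𝓝[>] (0:ℝ)) f id)
    (hsym : ∀ s, f (L - s) = f s)
    (hf' : ∀ s ∈ Set.Ico 0 (L / 2), 0 < deriv f s)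
    (hf'' : ∀ s ∈ Set.Icc 0 L, s ≠ L / 2 → deriv (deriv f) s ≤ 0)
    (hsec : deriv (deriv f) (L / 2) < 0) :
    (∃ M, ∀ s ∈ Set.Ico 0 (L / 2),
      |f s / deriv f s - f (L / 2) / (|deriv (deriv f) (L / 2)| * (L / 2 - s))| ≤ M) ∧
    ∀ A : ℝ, 0 < A →
      (fun n : ℕ => (1 / (n : ℝ)) * (∫ s in (0:ℝ)..(L / 2 - A / Real.sqrt n), f s / deriv f s)
          - f (L / 2) / |deriv (deriv f) (L / 2)|
            * (Real.log n / (2 * n) - Real.log A / n))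
        =O[atTop] (fun n : ℕ => 1 / (n : ℝ)) := by
  have hc : 0 < L / 2 := by linarith
  have hf'c : deriv f (L / 2) = 0 := by
    have hd : ∀ s : ℝ, deriv f s = -deriv f (L - s) := by
      intro s
      have heq : (fun x => f (L - x)) = f := funext hsym
      calc deriv f s = deriv (fun x => f (L - x)) s := by rw [heq]
      _ = -deriv f (L - s) := deriv_comp_const_sub f L s
    have h := hd (L / 2)
    rw [show L - L / 2 = L / 2 by ring] at h
    linarith
  have hD : 0 < |deriv (deriv f) (L / 2)| := abs_pos.mpr (ne_of_lt hsec)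
  have hfc2 : deriv (deriv f) (L / 2) = -|deriv (deriv f) (L / 2)| := by
    rw [abs_of_neg hsec]; ring
  obtain ⟨M, hM0, hM⟩ := aux_bounded (L / 2) |deriv (deriv f) (L / 2)| hc f hf hf' hf'c hD hfc2
  refine ⟨⟨M, hM⟩, ?_⟩
  intro A hA
  set D := |deriv (deriv f) (L / 2)| with hDdef
  set K := f (L / 2) with hKdef
  rw [Asymptotics.isBigO_iff]
  refine ⟨M * (L / 2) + |K / D * Real.log (L / 2)|, ?_⟩
  filter_upwards [eventually_ge_atTop 1, eventually_ge_atTop (⌈(A / (L / 2)) ^ 2⌉₊ + 1)]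
    with n hn1 hn2
  have hn0 : (0:ℝ) < n := by exact_mod_cast hn1
  have hAc2 : (A / (L / 2)) ^ 2 < (n : ℝ) := by
    calc (A / (L / 2)) ^ 2 ≤ (⌈(A / (L / 2)) ^ 2⌉₊ : ℝ) := Nat.le_ceil _
    _ < (⌈(A / (L / 2)) ^ 2⌉₊ : ℝ) + 1 := by linarith
    _ ≤ n := by exact_mod_cast hn2
  have hsq : 0 < Real.sqrt n := Real.sqrt_pos.mpr hn0
  set ε := A / Real.sqrt (n : ℝ) with hεdef
  have hε : 0 < ε := div_pos hA hsq
  have hεc : ε < L / 2 := by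
    have h1 : A / (L / 2) < Real.sqrt n :=
      (Real.lt_sqrt (le_of_lt (div_pos hA hc))).mpr hAc2
    rw [div_lt_iff₀ hc] at h1
    rw [hεdef, div_lt_iff₀ hsq]
    linarith [h1, mul_comm (Real.sqrt (n : ℝ)) (L / 2)]
  have hb0 : (0:ℝ) ≤ L / 2 - ε := by linarith
  -- integrability
  have hcont1 : ContinuousOn (fun s => f s / deriv f s) (Set.Icc 0 (L / 2 - ε)) := by
    obtain ⟨hD1, hD2, -, -⟩ := aux_smooth f hf
    exact (hD1.continuous.continuousOn).div (hD2.continuous.continuousOn)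
      (fun x hx => ne_of_gt (hf' x ⟨hx.1, by linarith [hx.2]⟩))
  have hcont2 : ContinuousOn (fun s => K / (D * (L / 2 - s))) (Set.Icc 0 (L / 2 - ε)) :=
    continuousOn_const.div
      ((continuous_const.mul (continuous_const.sub continuous_id)).continuousOn)
      (fun x hx => ne_of_gt (mul_pos hD (by linarith [hx.2])))
  have hInt1 : IntervalIntegrable (fun s => f s / deriv f s) volume 0 (L / 2 - ε) :=
    ContinuousOn.intervalIntegrable (by rwa [Set.uIcc_of_le hb0])
  have hInt2 : IntervalIntegrable (fun s => K / (D * (L / 2 - s))) volume 0 (L / 2 - ε) :=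
    ContinuousOn.intervalIntegrable (by rwa [Set.uIcc_of_le hb0])
  have hIntG : IntervalIntegrable
      (fun s => f s / deriv f s - K / (D * (L / 2 - s))) volume 0 (L / 2 - ε) :=
    hInt1.sub hInt2
  have hsplit : (∫ s in (0:ℝ)..(L / 2 - ε), f s / deriv f s)
      = (∫ s in (0:ℝ)..(L / 2 - ε), (f s / deriv f s - K / (D * (L / 2 - s))))
        + ∫ s in (0:ℝ)..(L / 2 - ε), K / (D * (L / 2 - s)) := by
    rw [← intervalIntegral.integral_add hIntG hInt2]
    simp
  have hI₂ : (∫ s in (0:ℝ)..(L / 2 - ε), K / (D * (L / 2 - s)))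
      = K / D * (Real.log (L / 2) - Real.log ε) := by
    have h1 : ∀ s : ℝ, K / (D * (L / 2 - s)) = K / D * (L / 2 - s)⁻¹ := fun s => by
      rw [div_mul_eq_div_div, div_eq_mul_inv]
    simp_rw [h1]
    rw [intervalIntegral.integral_const_mul]
    have h2 := intervalIntegral.integral_comp_sub_left (a := (0:ℝ)) (b := L / 2 - ε)
      (fun x : ℝ => x⁻¹) (L / 2)
    simp only [sub_zero, sub_sub_cancel] at h2
    rw [h2, integral_inv, Real.log_div (ne_of_gt hc) (ne_of_gt hε)]
    rw [Set.uIcc_of_le hεc.le]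
    intro h
    exact absurd h.1 (not_le.mpr hε)
  have hlogε : Real.log ε = Real.log A - Real.log n / 2 := by
    rw [hεdef, Real.log_div (ne_of_gt hA) (ne_of_gt hsq), Real.log_sqrt hn0.le]
  have hI₁ : |∫ s in (0:ℝ)..(L / 2 - ε), (f s / deriv f s - K / (D * (L / 2 - s)))|
      ≤ M * (L / 2) := by
    have h := intervalIntegral.norm_integral_le_of_norm_le_const (C := M)
      (f := fun s => f s / deriv f s - K / (D * (L / 2 - s))) (a := (0:ℝ)) (b := L / 2 - ε)
      (fun x hx => by
        rw [Set.uIoc_of_le hb0] at hx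
        have hx' : x ∈ Set.Ico (0:ℝ) (L / 2) := ⟨hx.1.le, by linarith [hx.2]⟩
        simpa [Real.norm_eq_abs] using hM x hx')
    rw [Real.norm_eq_abs] at h
    have habs : |L / 2 - ε - 0| = L / 2 - ε := by rw [sub_zero, abs_of_nonneg hb0]
    rw [habs] at h
    nlinarith
  have hkey : 1 / (n : ℝ) * (∫ s in (0:ℝ)..(L / 2 - ε), f s / deriv f s)
        - K / D * (Real.log n / (2 * n) - Real.log A / n)
      = 1 / (n : ℝ) * (∫ s in (0:ℝ)..(L / 2 - ε), (f s / deriv f s - K / (D * (L / 2 - s))))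
        + K / D * Real.log (L / 2) * (1 / n) := by
    rw [hsplit, hI₂, hlogε]
    generalize (∫ s in (0:ℝ)..(L / 2 - ε), (f s / deriv f s - K / (D * (L / 2 - s)))) = I
    ring
  rw [Real.norm_eq_abs, Real.norm_eq_abs, hkey]
  have h1n : 0 < 1 / (n : ℝ) := by positivity
  calc |1 / (n : ℝ) * (∫ s in (0:ℝ)..(L / 2 - ε), (f s / deriv f s - K / (D * (L / 2 - s))))
        + K / D * Real.log (L / 2) * (1 / n)|
      ≤ |1 / (n : ℝ) * (∫ s in (0:ℝ)..(L / 2 - ε), (f s / deriv f s - K / (D * (L / 2 - s))))|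
        + |K / D * Real.log (L / 2) * (1 / n)| := abs_add_le _ _
    _ ≤ 1 / (n : ℝ) * (M * (L / 2)) + |K / D * Real.log (L / 2)| * (1 / n) := by
        rw [abs_mul, abs_mul, abs_of_pos h1n]
        gcongr
    _ = (M * (L / 2) + |K / D * Real.log (L / 2)|) * |1 / (n : ℝ)| := by
        rw [abs_of_pos h1n]; ring
end
end

section
/- For k ≥ 2, let f be C^{2k+1}, symmetric about L/2, f'>0 on [0,L/2), f''≤0, with f(L/2+h) = f(L/2) + (f^{(2k)}(L/2)/(2k)!) h^{2k} + o(h^{2k}) and f^{(2k)}(L/2) < 0. Then Iₙ(L/2) ~ (1/(2k)) Γ(1/(2k)) · ((2k)! f(L/2)/(n |f^{(2k)}(L/2)|))^{1/(2k)} · f^{n−1}(L/2) as n → ∞. -/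
open MeasureTheory Filter Set Asymptotics Topology intervalIntegral Real

noncomputable section

/-- Scaled Laplace core integral limit. -/
lemma lap_lemA {pr : ℝ} (hpr : 1 ≤ pr) {δ : ℝ} (hδ : 0 < δ)
    {c : ℕ → ℝ} (hc : Tendsto c atTop atTop) :
    Tendsto (fun n => (c n) ^ (1/pr) * ∫ u in (0:ℝ)..δ, Real.exp (-(c n) * u ^ pr))
      atTop (𝓝 (Real.Gamma (1/pr + 1))) := by
  have hpr0 : 0 < pr := lt_of_lt_of_le one_pos hpr
  have hint : IntegrableOn (fun v : ℝ => Real.exp (-v ^ pr)) (Ioi 0) := by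
    have h := integrableOn_rpow_mul_exp_neg_rpow (by norm_num : (-1:ℝ) < 0) hpr0
    simpa using h
  have hlam : Tendsto (fun n => (c n) ^ (1/pr) * δ) atTop atTop :=
    ((tendsto_rpow_atTop (by positivity)).comp hc).atTop_mul_const hδ
  have main := intervalIntegral_tendsto_integral_Ioi 0 hint hlam
  rw [integral_exp_neg_rpow hpr0] at main
  apply main.congr'
  filter_upwards [hc.eventually_gt_atTop 0] with n hcn
  set lam := (c n) ^ (1/pr) with hlamdef
  have hlampos : 0 < lam := rpow_pos_of_pos hcn _
  have step1 : (∫ u in (0:ℝ)..δ, Real.exp (-(c n) * u ^ pr))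
      = ∫ u in (0:ℝ)..δ, Real.exp (-(lam * u) ^ pr) := by
    apply intervalIntegral.integral_congr
    intro u hu
    rw [uIcc_of_le hδ.le] at hu
    simp only []
    rw [mul_rpow hlampos.le hu.1, hlamdef, ← Real.rpow_mul hcn.le,
      one_div_mul_cancel hpr0.ne', Real.rpow_one, neg_mul]
  have step2 : (∫ u in (0:ℝ)..δ, Real.exp (-(lam * u) ^ pr))
      = lam⁻¹ • ∫ v in (lam * 0)..(lam * δ), Real.exp (-v ^ pr) :=
    intervalIntegral.integral_comp_mul_left (f := fun v => Real.exp (-v ^ pr)) hlampos.ne'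
  rw [step1, step2, smul_eq_mul, ← mul_assoc, mul_inv_cancel₀ hlampos.ne', one_mul, mul_zero]

/-- Geometric decay beats polynomial growth. -/
lemma lap_lemT {q : ℝ} (s : ℝ) (hq0 : 0 < q) (hq1 : q < 1) :
    Tendsto (fun n : ℕ => (n:ℝ) ^ s * q ^ (n-1)) atTop (𝓝 0) := by
  have hlog : Real.log q < 0 := Real.log_neg hq0 hq1
  have base := tendsto_rpow_mul_exp_neg_mul_atTop_nhds_zero s (-Real.log q) (by linarith)
  have h2 : Tendsto (fun n : ℕ => (n:ℝ) ^ s * Real.exp (-(-Real.log q) * n)) atTop (𝓝 0) :=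
    base.comp tendsto_natCast_atTop_atTop
  have h3 := h2.const_mul q⁻¹
  rw [mul_zero] at h3
  apply h3.congr'
  filter_upwards [eventually_ge_atTop 1] with n hn
  have hqn : Real.exp (-(-Real.log q) * n) = q ^ n := by
    rw [neg_neg, mul_comm, Real.exp_nat_mul, Real.exp_log hq0]
  rw [hqn]
  have : q ^ (n - 1) = q⁻¹ * q ^ n := by
    have : q ^ n = q ^ (n - 1) * q := by
      rw [← pow_succ, Nat.sub_add_cancel hn]
    rw [this]; field_simp
  rw [this]; ring

/-- Squeeze to 1 via families of bounds. -/
lemma lap_squeeze (R : ℕ → ℝ)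
    (H : ∀ ε : ℝ, 0 < ε → ∃ lo up : ℕ → ℝ, ∃ a b : ℝ,
      Tendsto lo atTop (𝓝 a) ∧ Tendsto up atTop (𝓝 b) ∧ 1 - ε < a ∧ b < 1 + ε ∧
      ∀ᶠ n in atTop, lo n ≤ R n ∧ R n ≤ up n) :
    Tendsto R atTop (𝓝 1) := by
  rw [Metric.tendsto_nhds]
  intro ε hε
  obtain ⟨lo, up, a, b, hlo, hup, ha, hb, hev⟩ := H ε hε
  filter_upwards [hlo.eventually_const_lt ha, hup.eventually_lt_const hb, hev] with n h1 h2 h3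
  rw [Real.dist_eq, abs_sub_lt_iff]
  constructor <;> linarith [h3.1, h3.2]

/-- `1 - x ≥ exp (-(1+η) x)` for small `x`. -/
lemma lap_exp_lb {η x : ℝ} (hη : 0 < η) (hx0 : 0 ≤ x) (hx : x ≤ η / (1 + η)) :
    Real.exp (-((1 + η) * x)) ≤ 1 - x := by
  have hx1 : (1 + η) * x ≤ η := by
    have := (le_div_iff₀ (by linarith : (0:ℝ) < 1 + η)).mp hx
    nlinarith
  have h1 : 1 + (1 + η) * x ≤ Real.exp ((1 + η) * x) := by
    have := Real.add_one_le_exp ((1 + η) * x); linarith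
  have hpos : (0:ℝ) < 1 + (1 + η) * x := by nlinarith
  have hxlt1 : x < 1 := by nlinarith
  rw [Real.exp_neg]
  rw [inv_le_comm₀ (Real.exp_pos _) (by linarith)]
  calc (1 - x)⁻¹ ≤ 1 + (1 + η) * x := by
        rw [inv_le_iff_one_le_mul₀ (by linarith)]
        nlinarith
    _ ≤ Real.exp ((1 + η) * x) := h1

set_option maxHeartbeats 2000000 in
/-- Laplace asymptotics with a degenerate maximum of order `2k`:
`Iₙ(L/2) ~ (1/(2k)) Γ(1/(2k)) ((2k)! f(L/2)/(n |f^{(2k)}(L/2)|))^{1/(2k)} f^{n-1}(L/2)`. -/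
theorem laplace_asymptotic_degenerate
    (L : ℝ) (hL : 0 < L) (k : ℕ) (hk : 2 ≤ k) (f : ℝ → ℝ)
    (hf : ContDiff ℝ (2 * k + 1 : ℕ) f)
    (hpos : ∀ s ∈ Set.Ioo 0 L, 0 < f s)
    (hasymp : Asymptotics.IsEquivalent (𝓝[>] (0:ℝ)) f id)
    (hsym : ∀ s, f (L - s) = f s)
    (hf' : ∀ s ∈ Set.Ico 0 (L / 2), 0 < deriv f s)
    (hf'' : ∀ s ∈ Set.Icc 0 L, s ≠ L / 2 → deriv (deriv f) s ≤ 0)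
    (hexp : (fun h : ℝ => f (L / 2 + h) - f (L / 2)
        - iteratedDeriv (2 * k) f (L / 2) / ((2 * k).factorial : ℝ) * h ^ (2 * k))
      =o[𝓝 (0:ℝ)] (fun h : ℝ => h ^ (2 * k)))
    (hneg : iteratedDeriv (2 * k) f (L / 2) < 0) :
    Asymptotics.IsEquivalent atTop
      (fun n : ℕ => ∫ t in (0:ℝ)..(L / 2), f t ^ (n - 1))
      (fun n : ℕ => (1 / (2 * k : ℝ)) * Real.Gamma (1 / (2 * k : ℝ))
        * (((2 * k).factorial : ℝ) * f (L / 2)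
            / ((n : ℝ) * |iteratedDeriv (2 * k) f (L / 2)|)) ^ ((1 : ℝ) / (2 * k : ℝ))
        * f (L / 2) ^ (n - 1)) := by
  -- notation
  set p : ℕ := 2 * k with hpdef
  set pr : ℝ := 2 * (k:ℝ) with hprdef
  have hprcast : ((p:ℕ):ℝ) = pr := by rw [hpdef, hprdef]; push_cast; ring
  have hk2 : (2:ℝ) ≤ (k:ℝ) := by exact_mod_cast hk
  have hpr1 : (1:ℝ) ≤ pr := by rw [hprdef]; nlinarith
  have hpr0 : (0:ℝ) < pr := by linarith
  have hpne : p ≠ 0 := by omega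
  have hpow : ∀ u : ℝ, u ^ pr = u ^ p := by
    intro u; rw [← hprcast]; exact Real.rpow_natCast u p
  have hEven : Even p := by rw [hpdef]; exact even_two_mul k
  have contf : Continuous f := hf.continuous
  set M : ℝ := f (L/2) with hMdef
  have hMpos : 0 < M := hpos _ ⟨by linarith, by linarith⟩
  set A : ℝ := iteratedDeriv p f (L/2) with hAdef
  have hfacpos : (0:ℝ) < (p.factorial : ℝ) := by exact_mod_cast p.factorial_pos
  set c : ℝ := A / (p.factorial : ℝ) with hcdef
  have hcneg : c < 0 := div_neg_of_neg_of_pos hneg hfacpos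
  set b : ℝ := (-c) / M with hbdef
  have hbpos : 0 < b := div_pos (by linarith) hMpos
  set Γ₀ : ℝ := Real.Gamma (1/pr + 1) with hΓdef
  have hΓpos : 0 < Γ₀ := Real.Gamma_pos_of_pos (by positivity)
  -- basic facts about f
  have f0 : f 0 = 0 := by
    have h1 : Tendsto f (𝓝[>] (0:ℝ)) (𝓝 0) :=
      hasymp.symm.tendsto_nhds (tendsto_id.mono_left nhdsWithin_le_nhds)
    have h2 : Tendsto f (𝓝[>] (0:ℝ)) (𝓝 (f 0)) :=
      (contf.tendsto 0).mono_left nhdsWithin_le_nhds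
    exact tendsto_nhds_unique h2 h1
  have mono : StrictMonoOn f (Icc 0 (L/2)) := by
    apply strictMonoOn_of_deriv_pos (convex_Icc _ _) contf.continuousOn
    intro x hx
    rw [interior_Icc] at hx
    exact hf' x ⟨hx.1.le, hx.2⟩
  have fnn : ∀ s ∈ Icc (0:ℝ) (L/2), 0 ≤ f s := by
    intro s hs
    rcases eq_or_lt_of_le hs.1 with h|h
    · rw [← h, f0]
    · have := mono.monotoneOn ⟨le_refl 0, by linarith [hs.2]⟩ hs hs.1
      rw [f0] at this; exact this
  -- the comparison family
  set G : ℕ → ℝ := fun n => 1 / pr * Real.Gamma (1 / pr)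
      * ((p.factorial : ℝ) * M / ((n:ℝ) * |A|)) ^ ((1:ℝ) / pr) * M ^ (n - 1) with hGdef
  have hgeq : ∀ n : ℕ, 1 ≤ n →
      G n = Γ₀ * ((n:ℝ) ^ (-(1/pr)) * b ^ (-(1/pr))) * M ^ (n-1) := by
    intro n hn
    have hn0 : (0:ℝ) < (n:ℝ) := by exact_mod_cast hn
    have hgamma : 1 / pr * Real.Gamma (1 / pr) = Γ₀ :=
      (Real.Gamma_add_one (by positivity)).symm
    have hquot : (p.factorial : ℝ) * M / ((n:ℝ) * |A|) = ((n:ℝ) * b)⁻¹ := by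
      rw [abs_of_neg hneg, hbdef, hcdef]
      field_simp
    rw [hGdef]
    simp only []
    rw [hgamma, hquot, Real.inv_rpow (by positivity), ← Real.rpow_neg (by positivity),
      Real.mul_rpow hn0.le hbpos.le]
  have hgpos : ∀ n : ℕ, 1 ≤ n → 0 < G n := by
    intro n hn
    have hn0 : (0:ℝ) < (n:ℝ) := by exact_mod_cast hn
    rw [hgeq n hn]
    have := Real.rpow_pos_of_pos hn0 (-(1/pr))
    have := Real.rpow_pos_of_pos hbpos (-(1/pr))
    positivity
  -- main per-η estimate
  have key : ∀ η : ℝ, 0 < η → η < 1 → ∃ lo up : ℕ → ℝ,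
      Tendsto lo atTop (𝓝 ((((1+η)^2)⁻¹) ^ ((1:ℝ)/pr))) ∧
      Tendsto up atTop (𝓝 (((1-η)⁻¹) ^ ((1:ℝ)/pr))) ∧
      ∀ᶠ n in atTop, lo n ≤ (∫ t in (0:ℝ)..(L / 2), f t ^ (n - 1)) / G n ∧
        (∫ t in (0:ℝ)..(L / 2), f t ^ (n - 1)) / G n ≤ up n := by
    intro η hη0 hη1
    -- extract the little-o bound
    have hcpos : (0:ℝ) < -c := by linarith
    have hexp' := hexp.def (mul_pos hη0 hcpos)
    rw [Metric.eventually_nhds_iff] at hexp'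
    obtain ⟨δ₀, hδ₀pos, hδ₀⟩ := hexp'
    -- choose δ
    set δ₁ : ℝ := min 1 (M * η / ((1+η)^2 * (-c))) with hδ₁def
    have hδ₁pos : 0 < δ₁ :=
      lt_min one_pos (div_pos (mul_pos hMpos hη0) (mul_pos (by positivity) (by linarith)))
    set δ : ℝ := min (δ₀/2) (min (L/4) δ₁) with hδdef
    have hδpos : 0 < δ := lt_min (by linarith) (lt_min (by linarith) hδ₁pos)
    have hδδ₀ : δ < δ₀ := lt_of_le_of_lt (min_le_left _ _) (by linarith)
    have hδL : δ ≤ L/4 := (min_le_right _ _).trans (min_le_left _ _)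
    have hδ1 : δ ≤ 1 := (min_le_right _ _).trans ((min_le_right _ _).trans (min_le_left _ _))
    have hδm : δ ≤ M * η / ((1+η)^2 * (-c)) :=
      (min_le_right _ _).trans ((min_le_right _ _).trans (min_le_right _ _))
    have hcc : (0:ℝ) ≤ (1+η) * (-c) := mul_nonneg (by linarith) hcpos.le
    have hδsmall : (1+η) * (-c) * δ ^ p ≤ M * η / (1+η) := by
      have h1 : δ ^ p ≤ δ := pow_le_of_le_one hδpos.le hδ1 hpne
      have h2 : (1+η) * (-c) * δ ≤ (1+η) * (-c) * (M * η / ((1+η)^2 * (-c))) :=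
        mul_le_mul_of_nonneg_left hδm hcc
      have h3 : (1+η) * (-c) * (M * η / ((1+η)^2 * (-c))) = M * η / (1+η) := by
        have hηpos : (0:ℝ) < 1 + η := by linarith
        rw [show (1+η) * (-c) * (M * η / ((1+η)^2 * (-c)))
            = (M * η) * (((1+η)*(-c)) / ((1+η)^2*(-c))) by ring]
        rw [show ((1+η)*(-c)) / ((1+η)^2*(-c)) = 1/(1+η) by
          rw [div_eq_div_iff (mul_pos (pow_pos hηpos 2) hcpos).ne' hηpos.ne']
          ring]
        rw [mul_one_div, mul_div_assoc]
      have h4 : (1+η) * (-c) * δ ^ p ≤ (1+η) * (-c) * δ :=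
        mul_le_mul_of_nonneg_left h1 hcc
      linarith
    -- pointwise expansion bound
    have hpoint : ∀ u ∈ Icc (0:ℝ) δ, |f (L/2 - u) - M - c * u ^ p| ≤ η * (-c) * u ^ p := by
      intro u hu
      have hdist : dist (-u) (0:ℝ) < δ₀ := by
        rw [Real.dist_eq, sub_zero, abs_neg, abs_of_nonneg hu.1]; linarith [hu.2]
      have h := hδ₀ hdist
      rw [Real.norm_eq_abs, Real.norm_eq_abs, hEven.neg_pow,
        abs_of_nonneg (pow_nonneg hu.1 p), ← sub_eq_add_neg] at h
      exact h
    -- upper pointwise bound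
    have hub : ∀ u ∈ Icc (0:ℝ) δ, f (L/2 - u) ≤ M * Real.exp (-((1-η)*b) * u ^ p) := by
      intro u hu
      have h := (abs_le.mp (hpoint u hu)).2
      have hupp : f (L/2 - u) ≤ M - (1-η) * (-c) * u ^ p := by
        have heq : M - (1-η) * (-c) * u ^ p = M + c * u ^ p + η * (-c) * u ^ p := by ring
        rw [heq]; linarith
      have hexp1 : 1 - ((1-η) * (-c) * u ^ p)/M
          ≤ Real.exp (-(((1-η) * (-c) * u ^ p)/M)) := by
        have := Real.add_one_le_exp (-(((1-η) * (-c) * u ^ p)/M)); linarith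
      have harg : -((1-η)*b) * u ^ p = -(((1-η) * (-c) * u ^ p)/M) := by
        rw [hbdef]; field_simp
      rw [harg]
      calc f (L/2 - u) ≤ M - (1-η) * (-c) * u ^ p := hupp
        _ = M * (1 - ((1-η) * (-c) * u ^ p)/M) := by field_simp
        _ ≤ M * Real.exp (-(((1-η) * (-c) * u ^ p)/M)) :=
            mul_le_mul_of_nonneg_left hexp1 hMpos.le
    -- lower pointwise bound
    have hbM : b * M = -c := by rw [hbdef]; field_simp
    have hlb : ∀ u ∈ Icc (0:ℝ) δ, M * Real.exp (-((1+η)^2*b) * u ^ p) ≤ f (L/2 - u) := by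
      intro u hu
      have h := (abs_le.mp (hpoint u hu)).1
      have hlow : M - (1+η) * (-c) * u ^ p ≤ f (L/2 - u) := by
        have heq : M - (1+η) * (-c) * u ^ p = M + c * u ^ p - η * (-c) * u ^ p := by ring
        rw [heq]; linarith
      set x : ℝ := (1+η) * b * u ^ p with hxdef
      have hupow : u ^ p ≤ δ ^ p := pow_le_pow_left₀ hu.1 hu.2 p
      have hupnn : (0:ℝ) ≤ u ^ p := pow_nonneg hu.1 p
      have hx0 : 0 ≤ x := by
        rw [hxdef]
        exact mul_nonneg (mul_nonneg (by linarith) hbpos.le) hupnn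
      have h2 : x * M = (1+η) * (-c) * u ^ p := by rw [hxdef, ← hbM]; ring
      have hxle : x ≤ η / (1+η) := by
        have h1 : (1+η) * (-c) * u ^ p ≤ M * η / (1+η) := by
          have := mul_le_mul_of_nonneg_left hupow hcc
          linarith [hδsmall]
        have h3 : x * M ≤ (η/(1+η)) * M := by
          calc x * M = (1+η) * (-c) * u ^ p := h2
            _ ≤ M * η / (1+η) := h1
            _ = (η/(1+η)) * M := by ring
        exact le_of_mul_le_mul_right (by linarith [h3]) hMpos
      have hkey := lap_exp_lb hη0 hx0 hxle
      have harg2 : -((1+η)^2*b) * u ^ p = -((1+η) * x) := by rw [hxdef]; ring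
      rw [harg2]
      calc M * Real.exp (-((1+η)*x)) ≤ M * (1 - x) :=
            mul_le_mul_of_nonneg_left hkey hMpos.le
        _ = M - x * M := by ring
        _ = M - (1+η) * (-c) * u ^ p := by rw [h2]
        _ ≤ f (L/2 - u) := hlow
    -- the corner value
    have hδL2 : δ ≤ L/2 := by linarith
    have hmemδ : L/2 - δ ∈ Icc (0:ℝ) (L/2) := ⟨by linarith, by linarith [hδpos]⟩
    have hfδpos : 0 < f (L/2 - δ) := hpos _ ⟨by linarith, by linarith⟩
    set Q : ℝ := f (L/2 - δ) / M with hQdef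
    have hQ0 : 0 < Q := div_pos hfδpos hMpos
    have hQ1 : Q < 1 := (div_lt_one hMpos).mpr
      (mono hmemδ ⟨by linarith, le_refl _⟩ (by linarith [hδpos]))
    have hQM : Q * M = f (L/2 - δ) := div_mul_cancel₀ _ hMpos.ne'
    -- the model integrals
    set a₁ : ℝ := (1-η) * b with ha₁def
    set a₂ : ℝ := (1+η)^2 * b with ha₂def
    have ha₁pos : 0 < a₁ := mul_pos (by linarith) hbpos
    have ha₂pos : 0 < a₂ := mul_pos (by positivity) hbpos
    set S₁ : ℕ → ℝ := fun n => ∫ u in (0:ℝ)..δ, Real.exp (-(((n-1:ℕ):ℝ) * a₁) * u ^ p)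
      with hS₁def
    set S₂ : ℕ → ℝ := fun n => ∫ u in (0:ℝ)..δ, Real.exp (-(((n-1:ℕ):ℝ) * a₂) * u ^ p)
      with hS₂def
    have contexp : ∀ C : ℝ, Continuous (fun u : ℝ => Real.exp (-C * u ^ p)) := by
      intro C
      exact Real.continuous_exp.comp (continuous_const.mul (continuous_pow p))
    have contfm : ∀ m : ℕ, Continuous (fun u : ℝ => f (L/2 - u) ^ m) := by
      intro m
      exact ((contf.comp (continuous_const.sub continuous_id)).pow m)
    -- membership transfer
    have hmem : ∀ u ∈ Icc (0:ℝ) δ, L/2 - u ∈ Icc (0:ℝ) (L/2) := by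
      intro u hu
      exact ⟨by linarith [hu.2], by linarith [hu.1]⟩
    -- integral splitting
    have hsplit : ∀ m : ℕ, (∫ t in (0:ℝ)..(L/2), f t ^ m)
        = (∫ t in (0:ℝ)..(L/2 - δ), f t ^ m) + ∫ t in (L/2 - δ)..(L/2), f t ^ m :=
      fun m => (intervalIntegral.integral_add_adjacent_intervals
        ((contf.pow m).intervalIntegrable _ _) ((contf.pow m).intervalIntegrable _ _)).symm
    have hsub : ∀ m : ℕ, (∫ t in (L/2 - δ)..(L/2), f t ^ m)
        = ∫ u in (0:ℝ)..δ, f (L/2 - u) ^ m := by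
      intro m
      rw [intervalIntegral.integral_comp_sub_left (fun t => f t ^ m) (L/2), sub_zero]
    -- upper integral bound
    have hIub : ∀ n : ℕ, 1 ≤ n → (∫ t in (0:ℝ)..(L/2), f t ^ (n-1))
        ≤ ((L/2) * Q ^ (n-1) + S₁ n) * M ^ (n-1) := by
      intro n hn
      have h0δ : (0:ℝ) ≤ L/2 - δ := by linarith
      have hb1 : (∫ t in (0:ℝ)..(L/2 - δ), f t ^ (n-1)) ≤ (L/2) * f (L/2-δ) ^ (n-1) := by
        have hfle : ∀ t ∈ Icc (0:ℝ) (L/2 - δ), f t ^ (n-1) ≤ f (L/2-δ) ^ (n-1) := by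
          intro t ht
          apply pow_le_pow_left₀ (fnn t ⟨ht.1, by linarith [ht.2]⟩)
          exact mono.monotoneOn ⟨ht.1, by linarith [ht.2]⟩ hmemδ ht.2
        calc (∫ t in (0:ℝ)..(L/2 - δ), f t ^ (n-1))
            ≤ ∫ _t in (0:ℝ)..(L/2 - δ), f (L/2-δ) ^ (n-1) := by
              apply intervalIntegral.integral_mono_on h0δ
                ((contf.pow _).intervalIntegrable _ _) (intervalIntegrable_const) hfle
          _ = (L/2 - δ) * f (L/2-δ) ^ (n-1) := by
              simp [smul_eq_mul]
          _ ≤ (L/2) * f (L/2-δ) ^ (n-1) := by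
              apply mul_le_mul_of_nonneg_right (by linarith)
                (pow_nonneg (fnn _ hmemδ) _)
      have hb2 : (∫ u in (0:ℝ)..δ, f (L/2 - u) ^ (n-1)) ≤ M ^ (n-1) * S₁ n := by
        have hple : ∀ u ∈ Icc (0:ℝ) δ, f (L/2 - u) ^ (n-1)
            ≤ M ^ (n-1) * Real.exp (-(((n-1:ℕ):ℝ) * a₁) * u ^ p) := by
          intro u hu
          have h1 : f (L/2-u) ^ (n-1) ≤ (M * Real.exp (-a₁ * u ^ p)) ^ (n-1) :=
            pow_le_pow_left₀ (fnn _ (hmem u hu)) (hub u hu) _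
          have h2 : (M * Real.exp (-a₁ * u ^ p)) ^ (n-1)
              = M ^ (n-1) * Real.exp (-(((n-1:ℕ):ℝ) * a₁) * u ^ p) := by
            rw [mul_pow, ← Real.exp_nat_mul]
            congr 2
            ring
          rw [h2] at h1; exact h1
        calc (∫ u in (0:ℝ)..δ, f (L/2 - u) ^ (n-1))
            ≤ ∫ u in (0:ℝ)..δ, M ^ (n-1) * Real.exp (-(((n-1:ℕ):ℝ) * a₁) * u ^ p) := by
              apply intervalIntegral.integral_mono_on hδpos.le
                ((contfm _).intervalIntegrable _ _)
                ((continuous_const.mul (contexp _)).intervalIntegrable _ _) hple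
          _ = M ^ (n-1) * S₁ n := by
              rw [hS₁def]; exact intervalIntegral.integral_const_mul _ _
      calc (∫ t in (0:ℝ)..(L/2), f t ^ (n-1))
          = (∫ t in (0:ℝ)..(L/2 - δ), f t ^ (n-1)) + ∫ t in (L/2 - δ)..(L/2), f t ^ (n-1) :=
            hsplit _
        _ ≤ (L/2) * f (L/2-δ) ^ (n-1) + M ^ (n-1) * S₁ n := by
            rw [hsub]
            exact add_le_add hb1 hb2
        _ = ((L/2) * Q ^ (n-1) + S₁ n) * M ^ (n-1) := by
            rw [← hQM, mul_pow]
            ring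
    -- lower integral bound
    have hIlb : ∀ n : ℕ, 1 ≤ n → S₂ n * M ^ (n-1) ≤ ∫ t in (0:ℝ)..(L/2), f t ^ (n-1) := by
      intro n hn
      have h0δ : (0:ℝ) ≤ L/2 - δ := by linarith
      have hp1 : 0 ≤ ∫ t in (0:ℝ)..(L/2 - δ), f t ^ (n-1) := by
        apply intervalIntegral.integral_nonneg h0δ
        intro t ht
        exact pow_nonneg (fnn t ⟨ht.1, by linarith [ht.2]⟩) _
      have hb2 : M ^ (n-1) * S₂ n ≤ ∫ u in (0:ℝ)..δ, f (L/2 - u) ^ (n-1) := by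
        have hple : ∀ u ∈ Icc (0:ℝ) δ,
            M ^ (n-1) * Real.exp (-(((n-1:ℕ):ℝ) * a₂) * u ^ p) ≤ f (L/2 - u) ^ (n-1) := by
          intro u hu
          have h1 : (M * Real.exp (-a₂ * u ^ p)) ^ (n-1) ≤ f (L/2-u) ^ (n-1) :=
            pow_le_pow_left₀ (mul_nonneg hMpos.le (Real.exp_nonneg _)) (hlb u hu) _
          have h2 : (M * Real.exp (-a₂ * u ^ p)) ^ (n-1)
              = M ^ (n-1) * Real.exp (-(((n-1:ℕ):ℝ) * a₂) * u ^ p) := by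
            rw [mul_pow, ← Real.exp_nat_mul]
            congr 2
            ring
          rw [h2] at h1; exact h1
        calc M ^ (n-1) * S₂ n
            = ∫ u in (0:ℝ)..δ, M ^ (n-1) * Real.exp (-(((n-1:ℕ):ℝ) * a₂) * u ^ p) := by
              rw [hS₂def]; exact (intervalIntegral.integral_const_mul _ _).symm
          _ ≤ ∫ u in (0:ℝ)..δ, f (L/2 - u) ^ (n-1) := by
              apply intervalIntegral.integral_mono_on hδpos.le
                ((continuous_const.mul (contexp _)).intervalIntegrable _ _)
                ((contfm _).intervalIntegrable _ _) hple
      calc S₂ n * M ^ (n-1) = M ^ (n-1) * S₂ n := by ring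
        _ ≤ ∫ u in (0:ℝ)..δ, f (L/2 - u) ^ (n-1) := hb2
        _ ≤ (∫ t in (0:ℝ)..(L/2 - δ), f t ^ (n-1)) + ∫ u in (0:ℝ)..δ, f (L/2 - u) ^ (n-1) := by
            linarith
        _ = ∫ t in (0:ℝ)..(L/2), f t ^ (n-1) := by
            rw [hsplit (n-1), hsub (n-1)]
    -- generic model-integral limit
    have t2gen : ∀ a : ℝ, 0 < a →
        Tendsto (fun n : ℕ => (n:ℝ) ^ ((1:ℝ)/pr)
            * ∫ u in (0:ℝ)..δ, Real.exp (-(((n-1:ℕ):ℝ) * a) * u ^ p)) atTop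
          (𝓝 (Γ₀ * (a⁻¹) ^ ((1:ℝ)/pr))) := by
      intro a hapos
      set cs : ℕ → ℝ := fun n => ((n-1:ℕ):ℝ) * a with hcsdef
      have hcst : Tendsto cs atTop atTop :=
        (tendsto_natCast_atTop_atTop.comp (tendsto_sub_atTop_nat 1)).atTop_mul_const hapos
      have hA' := lap_lemA hpr1 hδpos hcst
      have hA2 : Tendsto (fun n => (cs n) ^ ((1:ℝ)/pr)
          * ∫ u in (0:ℝ)..δ, Real.exp (-(((n-1:ℕ):ℝ) * a) * u ^ p)) atTop (𝓝 Γ₀) := by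
        rw [hΓdef]
        apply hA'.congr
        intro n
        congr 1
        apply intervalIntegral.integral_congr
        intro u _
        simp only [hcsdef]
        rw [hpow u]
      have hrat : Tendsto (fun n : ℕ => ((n:ℝ) / cs n) ^ ((1:ℝ)/pr)) atTop
          (𝓝 ((a⁻¹) ^ ((1:ℝ)/pr))) := by
        apply Tendsto.rpow_const _ (Or.inr (by positivity))
        have hinv : Tendsto (fun n : ℕ => ((n:ℝ)-1)⁻¹) atTop (𝓝 0) := by
          apply Tendsto.inv_tendsto_atTop
          have h := tendsto_atTop_add_const_right atTop (-1:ℝ) tendsto_natCast_atTop_atTop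
          apply h.congr
          intro n
          ring
        have hbase : Tendsto (fun n : ℕ => ((1:ℝ) + ((n:ℝ)-1)⁻¹) * a⁻¹) atTop
            (𝓝 (((1:ℝ) + 0) * a⁻¹)) := (tendsto_const_nhds.add hinv).mul_const a⁻¹
        rw [add_zero, one_mul] at hbase
        apply hbase.congr'
        filter_upwards [eventually_ge_atTop 2] with n hn
        have hn1 : ((n-1:ℕ):ℝ) = (n:ℝ) - 1 := by
          push_cast [Nat.cast_sub (by omega : 1 ≤ n)]
          ring
        have hn2 : (2:ℝ) ≤ (n:ℝ) := by exact_mod_cast hn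
        have hne : (n:ℝ) - 1 ≠ 0 := by linarith
        rw [hcsdef]
        simp only []
        rw [hn1]
        field_simp
        ring
      have hprod := hA2.mul hrat
      apply hprod.congr'
      filter_upwards [eventually_ge_atTop 2] with n hn
      have hn1pos : (0:ℝ) < ((n-1:ℕ):ℝ) := by
        have : 1 ≤ n - 1 := by omega
        exact_mod_cast Nat.lt_of_lt_of_le Nat.zero_lt_one this
      have hcspos : 0 < cs n := mul_pos hn1pos hapos
      rw [Real.div_rpow (Nat.cast_nonneg n) hcspos.le]
      have h1 : (0:ℝ) < (cs n) ^ ((1:ℝ)/pr) := Real.rpow_pos_of_pos hcspos _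
      field_simp
    -- value computation helper
    have hvalgen : ∀ a t : ℝ, 0 < a → b * a⁻¹ = t →
        (b ^ ((1:ℝ)/pr) / Γ₀) * (Γ₀ * (a⁻¹) ^ ((1:ℝ)/pr)) = t ^ ((1:ℝ)/pr) := by
      intro a t ha hba
      calc (b ^ ((1:ℝ)/pr) / Γ₀) * (Γ₀ * (a⁻¹) ^ ((1:ℝ)/pr))
          = (b ^ ((1:ℝ)/pr) * (a⁻¹) ^ ((1:ℝ)/pr)) * (Γ₀ / Γ₀) := by ring
        _ = (b * a⁻¹) ^ ((1:ℝ)/pr) * 1 := by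
            rw [div_self hΓpos.ne', ← Real.mul_rpow hbpos.le (inv_nonneg.mpr ha.le)]
        _ = t ^ ((1:ℝ)/pr) := by rw [hba, mul_one]
    -- the bounding sequences
    refine ⟨fun n => S₂ n * ((n:ℝ) ^ ((1:ℝ)/pr) * b ^ ((1:ℝ)/pr) / Γ₀),
      fun n => ((L/2) * Q ^ (n-1) + S₁ n) * ((n:ℝ) ^ ((1:ℝ)/pr) * b ^ ((1:ℝ)/pr) / Γ₀),
      ?_, ?_, ?_⟩
    · -- lower limit
      have h := (t2gen a₂ ha₂pos).const_mul (b ^ ((1:ℝ)/pr) / Γ₀)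
      have hval : (b ^ ((1:ℝ)/pr) / Γ₀) * (Γ₀ * (a₂⁻¹) ^ ((1:ℝ)/pr))
          = (((1+η)^2)⁻¹) ^ ((1:ℝ)/pr) := by
        apply hvalgen _ _ ha₂pos
        rw [ha₂def, mul_inv]
        rw [mul_comm ((1+η)^2)⁻¹ b⁻¹, ← mul_assoc, mul_inv_cancel₀ hbpos.ne', one_mul]
      rw [hval] at h
      apply h.congr
      intro n
      ring
    · -- upper limit
      have h1 := (lap_lemT ((1:ℝ)/pr) hQ0 hQ1).const_mul ((L/2) * (b ^ ((1:ℝ)/pr) / Γ₀))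
      rw [mul_zero] at h1
      have h2 := (t2gen a₁ ha₁pos).const_mul (b ^ ((1:ℝ)/pr) / Γ₀)
      have hval : (b ^ ((1:ℝ)/pr) / Γ₀) * (Γ₀ * (a₁⁻¹) ^ ((1:ℝ)/pr))
          = ((1-η)⁻¹) ^ ((1:ℝ)/pr) := by
        apply hvalgen _ _ ha₁pos
        rw [ha₁def, mul_inv]
        rw [mul_comm (1-η)⁻¹ b⁻¹, ← mul_assoc, mul_inv_cancel₀ hbpos.ne', one_mul]
      rw [hval] at h2
      have h := h1.add h2
      rw [zero_add] at h
      apply h.congr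
      intro n
      ring
    · -- eventual inequalities
      filter_upwards [eventually_ge_atTop 1] with n hn
      have hn0 : (0:ℝ) < (n:ℝ) := by exact_mod_cast hn
      have hdiv : ∀ X : ℝ, (X * M ^ (n-1)) / G n
          = X * ((n:ℝ) ^ ((1:ℝ)/pr) * b ^ ((1:ℝ)/pr) / Γ₀) := by
        intro X
        rw [hgeq n hn, Real.rpow_neg hn0.le, Real.rpow_neg hbpos.le]
        have h1 : (0:ℝ) < (n:ℝ) ^ ((1:ℝ)/pr) := Real.rpow_pos_of_pos hn0 _
        have h2 : (0:ℝ) < b ^ ((1:ℝ)/pr) := Real.rpow_pos_of_pos hbpos _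
        have h3 : (0:ℝ) < M ^ (n-1) := pow_pos hMpos _
        field_simp
      constructor
      · rw [← hdiv (S₂ n)]
        exact (div_le_div_iff_of_pos_right (hgpos n hn)).mpr (hIlb n hn)
      · rw [← hdiv ((L/2) * Q ^ (n-1) + S₁ n)]
        exact (div_le_div_iff_of_pos_right (hgpos n hn)).mpr (hIub n hn)
  -- final assembly
  rw [Asymptotics.isEquivalent_iff_tendsto_one
    (by filter_upwards [eventually_ge_atTop 1] with n hn; exact (hgpos n hn).ne')]
  apply lap_squeeze
  intro ε hε
  have hcont1 : Tendsto (fun η : ℝ => ((1-η)⁻¹) ^ ((1:ℝ)/pr)) (𝓝 0) (𝓝 1) := by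
    have h1 : ContinuousAt (fun η : ℝ => ((1-η)⁻¹) ^ ((1:ℝ)/pr)) 0 := by
      apply ContinuousAt.rpow_const
      · exact (continuousAt_const.sub continuousAt_id).inv₀ (by norm_num)
      · right; positivity
    have h2 := h1.tendsto
    norm_num [one_div] at h2 ⊢
    exact h2
  have hcont2 : Tendsto (fun η : ℝ => (((1+η)^2)⁻¹) ^ ((1:ℝ)/pr)) (𝓝 0) (𝓝 1) := by
    have h1 : ContinuousAt (fun η : ℝ => (((1+η)^2)⁻¹) ^ ((1:ℝ)/pr)) 0 := by
      apply ContinuousAt.rpow_const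
      · exact ((continuousAt_const.add continuousAt_id).pow 2).inv₀ (by norm_num)
      · right; positivity
    have h2 := h1.tendsto
    norm_num [one_div] at h2 ⊢
    exact h2
  have hex : ∃ η : ℝ, (0 < η ∧ η < 1) ∧ ((1-η)⁻¹) ^ ((1:ℝ)/pr) < 1 + ε ∧
      1 - ε < (((1+η)^2)⁻¹) ^ ((1:ℝ)/pr) := by
    have h1 : ∀ᶠ η in 𝓝 (0:ℝ), ((1-η)⁻¹) ^ ((1:ℝ)/pr) < 1 + ε :=
      hcont1.eventually_lt_const (by linarith)
    have h2 : ∀ᶠ η in 𝓝 (0:ℝ), 1 - ε < (((1+η)^2)⁻¹) ^ ((1:ℝ)/pr) :=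
      hcont2.eventually_const_lt (by linarith)
    have h3 : ∀ᶠ η in 𝓝 (0:ℝ), η < 1 := eventually_lt_nhds one_pos
    have h4 := ((h1.and (h2.and h3)).filter_mono (nhdsWithin_le_nhds (s := Ioi (0:ℝ))))
    obtain ⟨η, hη1, hη2⟩ := (h4.and eventually_mem_nhdsWithin).exists
    exact ⟨η, ⟨hη2, hη1.2.2⟩, hη1.1, hη1.2.1⟩
  obtain ⟨η, ⟨hη0, hη1⟩, hbv, hav⟩ := hex
  obtain ⟨lo, up, hlot, hupt, hevlu⟩ := key η hη0 hη1
  refine ⟨lo, up, _, _, hlot, hupt, hav, hbv, ?_⟩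
  filter_upwards [hevlu] with n hn
  simpa [Pi.div_apply] using hn
end
end
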